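/- There is no Cartesian magic (1,q,r)-board for any positive integers q ≤ r (including q = r = 1). -/
import Mathlib

lemma gauss_aux : ∀ n : ℕ, 2 * (∑ i ∈ Finset.range n, (i + 1)) = n * (n + 1) := by
  intro n
  induction n with
  | zero => simp
  | succ k ih =>
    rw [Finset.sum_range_succ, Nat.mul_add, ih]
    ring

/-- There is no Cartesian magic `(1,q,r)`-board for any positive integers `q ≤ r`. -/
theorem stmt11 (q r : ℕ) (hq : 0 < q) (hr : 0 < r) (hqr : q ≤ r) :
    ¬ ∃ (m : ℕ) (e : (Fin q ⊕ Fin r ⊕ (Fin q × Fin r)) ≃ Fin (q + r + q * r)),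
      ((∑ j, ((e (Sum.inl j)).val + 1)) + (∑ k, ((e (Sum.inr (Sum.inl k))).val + 1)) = m) ∧
      (∀ j : Fin q,
        ((e (Sum.inl j)).val + 1) + (∑ k, ((e (Sum.inr (Sum.inr (j, k)))).val + 1)) = m) ∧
      (∀ k : Fin r,
        ((e (Sum.inr (Sum.inl k))).val + 1) + (∑ j, ((e (Sum.inr (Sum.inr (j, k)))).val + 1)) = m) := by
  rintro ⟨m, e, h1, h2, h3⟩
  -- the three block sums
  have hrow : (∑ j, ((e (Sum.inl j)).val + 1)) +
      (∑ p : Fin q × Fin r, ((e (Sum.inr (Sum.inr p))).val + 1)) = q * m := by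
    have h := Finset.sum_congr rfl (fun j (_ : j ∈ (Finset.univ : Finset (Fin q))) => h2 j)
    rw [Finset.sum_add_distrib, Finset.sum_const, Finset.card_univ, Fintype.card_fin,
      smul_eq_mul] at h
    rw [Fintype.sum_prod_type]
    omega
  have hcol : (∑ k, ((e (Sum.inr (Sum.inl k))).val + 1)) +
      (∑ p : Fin q × Fin r, ((e (Sum.inr (Sum.inr p))).val + 1)) = r * m := by
    have h := Finset.sum_congr rfl (fun k (_ : k ∈ (Finset.univ : Finset (Fin r))) => h3 k)
    rw [Finset.sum_add_distrib, Finset.sum_const, Finset.card_univ, Fintype.card_fin,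
      smul_eq_mul] at h
    rw [Fintype.sum_prod_type, Finset.sum_comm]
    omega
  -- total sum
  have htot : (∑ j, ((e (Sum.inl j)).val + 1)) + (∑ k, ((e (Sum.inr (Sum.inl k))).val + 1)) +
      (∑ p : Fin q × Fin r, ((e (Sum.inr (Sum.inr p))).val + 1)) =
      ∑ i : Fin (q + r + q * r), (i.val + 1) := by
    have h := Equiv.sum_comp e (fun i : Fin (q + r + q * r) => i.val + 1)
    rw [Fintype.sum_sum_type, Fintype.sum_sum_type] at h
    omega
  have hgauss : 2 * (∑ i : Fin (q + r + q * r), (i.val + 1)) =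
      (q + r + q * r) * (q + r + q * r + 1) := by
    rw [Fin.sum_univ_eq_sum_range (fun i => i + 1) (q + r + q * r)]
    exact gauss_aux _
  -- lower bounds
  have hAge : q ≤ ∑ j, ((e (Sum.inl j)).val + 1) := by
    calc q = ∑ _j : Fin q, 1 := by simp
    _ ≤ _ := Finset.sum_le_sum (fun j _ => by omega)
  have hBge : r ≤ ∑ k, ((e (Sum.inr (Sum.inl k))).val + 1) := by
    calc r = ∑ _k : Fin r, 1 := by simp
    _ ≤ _ := Finset.sum_le_sum (fun k _ => by omega)
  -- r = q
  have hrq : r = q := by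
    by_contra hne
    have hr' : q + 1 ≤ r := by omega
    have hle : (q + 1) * m ≤ r * m := Nat.mul_le_mul_right m hr'
    rw [add_mul, one_mul] at hle
    omega
  subst hrq
  -- key equation: (2r+1) * m = N * (N+1), N = r + r + r*r
  have hkey : (2 * r + 1) * m = (r + r + r * r) * (r + r + r * r + 1) := by
    have h2rm : (2 * r + 1) * m = 2 * (r * m) + m := by ring
    omega
  -- divisibility: 2r+1 ∣ 3 over ℤ
  have hdvd : (2 * (r : ℤ) + 1) ∣ 3 := by
    refine ⟨(2*(r:ℤ)+1)^3 + 4*(2*(r:ℤ)+1)^2 + 2*(2*(r:ℤ)+1) - 4 - 16 * m, ?_⟩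
    have hkeyZ : (2 * (r : ℤ) + 1) * m =
        ((r:ℤ) + r + r * r) * ((r:ℤ) + r + r * r + 1) := by exact_mod_cast hkey
    linear_combination (16 : ℤ) * hkeyZ
  have hr1 : r = 1 := by
    have h3 : (0 : ℤ) < 3 := by norm_num
    have := Int.le_of_dvd h3 hdvd
    omega
  subst hr1
  -- now N = 3, m = 4, A = B = 2
  have hm : m = 4 := by omega
  have hAone : (∑ j, ((e (Sum.inl j)).val + 1)) = (e (Sum.inl (0 : Fin 1))).val + 1 := by
    simp
  have hBone : (∑ k, ((e (Sum.inr (Sum.inl k))).val + 1)) =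
      (e (Sum.inr (Sum.inl (0 : Fin 1)))).val + 1 := by
    simp
  have heq : e (Sum.inl (0 : Fin 1)) = e (Sum.inr (Sum.inl (0 : Fin 1))) := by
    apply Fin.ext
    omega
  exact absurd (e.injective heq) (by simp)
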